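/- Let ω₀ > 0, m_D > 0, m_C > 0, b ≥ 0 be reals, let N be a positive integer, set m_r = m_C·m_D/(N·m_D + m_C), and let 0 < k < 3ω₀²·m_D. Then the real 4×4 matrix A₁ with rows (0, 1, 0, 0), (−3ω₀²·m_r/m_D, 0, 0, 2ω₀), (0, 0, 0, 1), (0, −2ω₀, 3ω₀² − k/m_D, −b/m_D) has a real eigenvalue ρ > 0. -/

import Mathlib

open Matrix Polynomial

lemma charpoly_eval_aux (a c d e : ℝ) (x : ℝ) :
    ((!![0, 1, 0, 0; a, 0, 0, c; 0, 0, 0, 1; 0, -c, d, e] :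
      Matrix (Fin 4) (Fin 4) ℝ).charpoly).eval x =
    x^4 - e*x^3 + (c^2 - d - a)*x^2 + a*e*x + a*d := by
  simp [Matrix.charpoly, Matrix.det_succ_row_zero, Fin.sum_univ_succ, charmatrix_apply,
    Matrix.one_apply, Matrix.diagonal_apply, Fin.succAbove]
  ring

lemma quartic_pos_root (a c d e : ℝ) (ha : a < 0) (hd : 0 < d) (he : e ≤ 0)
    (hcda : 0 < c^2 - d - a) :
    ∃ ρ : ℝ, 0 < ρ ∧ ρ^4 - e*ρ^3 + (c^2 - d - a)*ρ^2 + a*e*ρ + a*d = 0 := by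
  set f : ℝ → ℝ := fun x => x^4 - e*x^3 + (c^2 - d - a)*x^2 + a*e*x + a*d with hf
  have hcont : Continuous f := by fun_prop
  have had : a * d < 0 := mul_neg_of_neg_of_pos ha hd
  have hae : 0 ≤ a * e := by nlinarith
  set T : ℝ := 1 - a * d with hT
  have hT1 : 1 ≤ T := by rw [hT]; linarith
  have hkey : 0 ≤ T * (T - 1) * (T^2 + T + 1) := by
    apply mul_nonneg (mul_nonneg (by linarith) (by linarith))
    nlinarith [sq_nonneg T, sq_nonneg (T+1)]
  have hT4 : T ≤ T^4 := by nlinarith [hkey]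
  have hfT : 0 < f T := by
    rw [hf]
    simp only
    nlinarith [mul_nonneg hae (by linarith : (0:ℝ) ≤ T),
      mul_nonneg (mul_nonneg (by linarith : (0:ℝ) ≤ -e) (by linarith : (0:ℝ) ≤ T))
        (mul_nonneg (by linarith : (0:ℝ) ≤ T) (by linarith : (0:ℝ) ≤ T)),
      mul_nonneg hcda.le (mul_nonneg (by linarith : (0:ℝ) ≤ T) (by linarith : (0:ℝ) ≤ T))]
  have hf0 : f 0 < 0 := by rw [hf]; simp only; nlinarith
  obtain ⟨ρ, hρmem, hρ⟩ := intermediate_value_Icc (by linarith : (0:ℝ) ≤ T)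
    hcont.continuousOn (Set.mem_Icc.mpr ⟨hf0.le, hfT.le⟩)
  refine ⟨ρ, ?_, hρ⟩
  rcases lt_or_eq_of_le hρmem.1 with h | h
  · exact h
  · exfalso; rw [← h] at hρ; rw [hρ] at hf0; exact lt_irrefl 0 hf0

/-- If the stability condition is violated (`0 < k < 3ω₀²·m_D`), then the matrix
`A₁` of the linearized in-plane relative motion between deputy satellites has a
positive real eigenvalue (a positive real root of its characteristic
polynomial), so the vertical equilibrium is unstable. -/
theorem deputy_relative_motion_unstable (ω₀ mD mC k b : ℝ) (N : ℕ)
    (hω₀ : 0 < ω₀) (hmD : 0 < mD) (hmC : 0 < mC) (hb : 0 ≤ b)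
    (hk : 0 < k) (hk' : k < 3 * ω₀ ^ 2 * mD)
    (hN : 0 < N) (mr : ℝ) (hmr : mr = mC * mD / ((N : ℝ) * mD + mC)) :
    ∃ ρ : ℝ, 0 < ρ ∧
      (Matrix.charpoly
        (!![0, 1, 0, 0;
            -3 * ω₀ ^ 2 * mr / mD, 0, 0, 2 * ω₀;
            0, 0, 0, 1;
            0, -2 * ω₀, 3 * ω₀ ^ 2 - k / mD, -b / mD] :
          Matrix (Fin 4) (Fin 4) ℝ)).IsRoot ρ := by
  have hmatch : (!![0, 1, 0, 0;
            -3 * ω₀ ^ 2 * mr / mD, 0, 0, 2 * ω₀;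
            0, 0, 0, 1;
            0, -2 * ω₀, 3 * ω₀ ^ 2 - k / mD, -b / mD] :
          Matrix (Fin 4) (Fin 4) ℝ) =
      !![0, 1, 0, 0;
         -3 * ω₀ ^ 2 * mr / mD, 0, 0, 2 * ω₀;
         0, 0, 0, 1;
         0, -(2 * ω₀), 3 * ω₀ ^ 2 - k / mD, -b / mD] := by
    ext i j
    fin_cases i <;> fin_cases j <;> norm_num
  rw [hmatch]
  have hmr' : 0 < mr := by
    rw [hmr]
    have hden : 0 < (N : ℝ) * mD + mC := by positivity
    positivity
  have ha : (-3 * ω₀ ^ 2 * mr / mD : ℝ) < 0 := by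
    have h1 : (-3 * ω₀ ^ 2 * mr / mD : ℝ) = -(3 * ω₀ ^ 2 * mr / mD) := by ring
    have h2 : 0 < 3 * ω₀ ^ 2 * mr / mD := by positivity
    rw [h1]; linarith
  have hd : (0:ℝ) < 3 * ω₀ ^ 2 - k / mD := by
    rw [sub_pos, div_lt_iff₀ hmD]; linarith
  have he : (-b / mD : ℝ) ≤ 0 := div_nonpos_of_nonpos_of_nonneg (by linarith) hmD.le
  have hcda : (0:ℝ) < (2 * ω₀)^2 - (3 * ω₀ ^ 2 - k / mD) - (-3 * ω₀ ^ 2 * mr / mD) := by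
    have h1 : (2 * ω₀)^2 - (3 * ω₀ ^ 2 - k / mD) - (-3 * ω₀ ^ 2 * mr / mD)
        = ω₀^2 + k / mD + 3 * ω₀ ^ 2 * mr / mD := by ring
    rw [h1]; positivity
  obtain ⟨ρ, hρ, hroot⟩ := quartic_pos_root (-3 * ω₀ ^ 2 * mr / mD) (2 * ω₀)
    (3 * ω₀ ^ 2 - k / mD) (-b / mD) ha hd he hcda
  exact ⟨ρ, hρ, by rw [Polynomial.IsRoot, charpoly_eval_aux]; exact hroot⟩
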